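/- Let f be a homeomorphism of a compact metric space X, and let p, q be periodic points of f such that Orb(q) is a (γ,κ)-good approximation of Orb(p), where γ > 0 and κ ∈ (0,1]. Let φ : X → ℝ be continuous, let K ≥ 0 satisfy |φ(x)| ≤ K for all x ∈ X, and let ε > 0 be such that |φ(x) − φ(y)| < ε whenever d(x,y) < γ. Then |∫φ dμ_q − ∫φ dμ_p| < ε + 2K(1−κ). -/

import Mathlib

open MeasureTheory Filter Topology Function
open scoped Classical ENNReal

/-- The orbit `{p, f(p), …, f^{π(p)−1}(p)}` of a point under `f`, where `π(p)` is the
minimal period of `p`. -/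
def orbit {X : Type*} (f : X → X) (p : X) : Set X :=
  (fun i => f^[i] p) '' Set.Iio (Function.minimalPeriod f p)

/-- `(S, ρ)` witnesses that the orbit of `q` is a `(γ,κ)`-good approximation of the
orbit of `p`. -/
def GoodApproxWitness {X : Type*} [MetricSpace X] (f : X → X) (γ κ : ℝ) (p q : X)
    (S : Finset X) (ρ : X → X) : Prop :=
  (↑S : Set X) ⊆ orbit f q ∧
  (∀ x ∈ S, ρ x ∈ orbit f p) ∧
  κ < (S.card : ℝ) / (Function.minimalPeriod f q : ℝ) ∧
  (∀ x ∈ S, ∀ i < Function.minimalPeriod f p, dist (f^[i] x) (f^[i] (ρ x)) < γ) ∧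
  (∀ y₁ ∈ orbit f p, ∀ y₂ ∈ orbit f p,
    (S.filter fun x => ρ x = y₁).card = (S.filter fun x => ρ x = y₂).card)

/-- The orbit of `q` is a `(γ,κ)`-good approximation of the orbit of `p`. -/
def GoodApprox {X : Type*} [MetricSpace X] (f : X → X) (γ κ : ℝ) (p q : X) : Prop :=
  ∃ S ρ, GoodApproxWitness f γ κ p q S ρ

/-- The periodic measure `μ_p = (1/π(p)) Σ_{i<π(p)} δ_{f^i(p)}`. -/
noncomputable def periodicMeasure {X : Type*} [MeasurableSpace X] (f : X → X) (p : X) :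
    Measure X :=
  (Function.minimalPeriod f p : ℝ≥0∞)⁻¹ •
    ∑ i ∈ Finset.range (Function.minimalPeriod f p), Measure.dirac (f^[i] p)

/-- Integral of a continuous function against a periodic measure. -/
lemma integral_periodicMeasure {X : Type*} [MetricSpace X] [CompactSpace X]
    [MeasurableSpace X] [BorelSpace X] (f : X → X) (x : X) (φ : C(X, ℝ)) :
    ∫ z, φ z ∂(periodicMeasure f x)
      = ((Function.minimalPeriod f x : ℝ))⁻¹ *
        ∑ i ∈ Finset.range (Function.minimalPeriod f x), φ (f^[i] x) := by
  have hint : ∀ a : X, Integrable (fun z => φ z) (Measure.dirac a) := fun a =>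
    φ.continuous.integrable_of_hasCompactSupport (isClosed_tsupport _).isCompact
  rw [periodicMeasure, integral_smul_measure,
    integral_finset_sum_measure (fun i _ => hint _)]
  simp [integral_dirac, ENNReal.toReal_inv]

/-- one-step shift invariance of the orbit sum -/
lemma sum_orbit_step {X : Type*} (f : X → X) (x : X) (hx : x ∈ Function.periodicPts f)
    (g : X → ℝ) :
    ∑ i ∈ Finset.range (Function.minimalPeriod f x), g (f^[i] (f x))
      = ∑ i ∈ Finset.range (Function.minimalPeriod f x), g (f^[i] x) := by
  have h1 : ∀ i, g (f^[i] (f x)) = g (f^[i+1] x) := fun i => by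
    rw [← Function.iterate_succ_apply]
  have h2 : ∑ i ∈ Finset.range (Function.minimalPeriod f x + 1), g (f^[i] x)
      = ∑ i ∈ Finset.range (Function.minimalPeriod f x), g (f^[i+1] x) + g (f^[0] x) :=
    Finset.sum_range_succ' _ _
  have h3 : ∑ i ∈ Finset.range (Function.minimalPeriod f x + 1), g (f^[i] x)
      = ∑ i ∈ Finset.range (Function.minimalPeriod f x), g (f^[i] x) + g (f^[Function.minimalPeriod f x] x) :=
    Finset.sum_range_succ _ _
  simp only [h1]
  rw [Function.iterate_minimalPeriod] at h3
  simp only [Function.iterate_zero_apply] at h2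
  linarith [h2, h3]

/-- shift invariance of the orbit sum -/
lemma sum_orbit_shift {X : Type*} (f : X → X) (x : X) (hx : x ∈ Function.periodicPts f)
    (g : X → ℝ) (k : ℕ) :
    ∑ i ∈ Finset.range (Function.minimalPeriod f x), g (f^[i] (f^[k] x))
      = ∑ i ∈ Finset.range (Function.minimalPeriod f x), g (f^[i] x) := by
  induction k with
  | zero => simp
  | succ k ih =>
      have hy : f^[k] x ∈ Function.periodicPts f := by
        obtain ⟨n, hn, hpt⟩ := hx
        exact ⟨n, hn, hpt.apply_iterate k⟩
      have hper : Function.minimalPeriod f (f^[k] x) = Function.minimalPeriod f x :=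
        Function.minimalPeriod_apply_iterate hx k
      have := sum_orbit_step f (f^[k] x) hy g
      rw [hper] at this
      simp only [Function.iterate_succ_apply'] at *
      rw [this, ih]

theorem integral_periodicMeasure_close {X : Type*} [MetricSpace X] [CompactSpace X]
    [MeasurableSpace X] [BorelSpace X]
    (f : X ≃ₜ X) (p q : X) (γ κ : ℝ)
    (hp : p ∈ Function.periodicPts ⇑f) (hq : q ∈ Function.periodicPts ⇑f)
    (hγ : 0 < γ) (hκ0 : 0 < κ) (hκ1 : κ ≤ 1)
    (happ : GoodApprox ⇑f γ κ p q)
    (φ : C(X, ℝ)) (K : ℝ) (hK0 : 0 ≤ K) (hK : ∀ x, |φ x| ≤ K)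
    (ε : ℝ) (hε : 0 < ε) (hmod : ∀ x y : X, dist x y < γ → |φ x - φ y| < ε) :
    |(∫ x, φ x ∂(periodicMeasure ⇑f q)) - ∫ x, φ x ∂(periodicMeasure ⇑f p)| <
      ε + 2 * K * (1 - κ) := by
  obtain ⟨S, ρ, hSorb, hρorb, hκcard, hdist, -⟩ := happ
  set np := Function.minimalPeriod (⇑f) p with hnp_def
  set nq := Function.minimalPeriod (⇑f) q with hnq_def
  have hnp : 0 < np := Function.minimalPeriod_pos_of_mem_periodicPts hp
  have hnq : 0 < nq := Function.minimalPeriod_pos_of_mem_periodicPts hq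
  have hnpR : (0:ℝ) < np := Nat.cast_pos.mpr hnp
  have hnqR : (0:ℝ) < nq := Nat.cast_pos.mpr hnq
  set Sp : ℝ := ∑ i ∈ Finset.range np, φ ((⇑f)^[i] p) with hSp_def
  set T : Finset ℕ := (Finset.range nq).filter (fun j => (⇑f)^[j] q ∈ S) with hT_def
  -- S is the image of T
  have hST : S = T.image (fun j => (⇑f)^[j] q) := by
    ext x
    simp only [Finset.mem_image, hT_def, Finset.mem_filter, Finset.mem_range]
    constructor
    · intro hx
      obtain ⟨k, hk, hkx⟩ := hSorb hx
      dsimp only at hkx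
      exact ⟨k, ⟨hk, by rwa [hkx]⟩, hkx⟩
    · rintro ⟨j, ⟨-, hj⟩, rfl⟩
      exact hj
  have hcardST : S.card = T.card := by
    rw [hST]
    apply Finset.card_image_of_injOn
    intro a ha b hb hab
    have ha' : a ∈ Set.Iio nq := by
      have := (Finset.mem_filter.mp ha).1; simpa using Finset.mem_range.mp this
    have hb' : b ∈ Set.Iio nq := by
      have := (Finset.mem_filter.mp hb).1; simpa using Finset.mem_range.mp this
    exact Function.iterate_injOn_Iio_minimalPeriod ha' hb' hab
  have hTsub : T ⊆ Finset.range nq := Finset.filter_subset _ _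
  have hTle : T.card ≤ nq := by
    simpa using Finset.card_le_card hTsub
  have hκT : κ < (T.card : ℝ) / nq := by rw [← hcardST]; exact hκcard
  -- Sp bound
  have hSpK : |Sp| ≤ np * K := by
    calc |Sp| ≤ ∑ i ∈ Finset.range np, |φ ((⇑f)^[i] p)| := Finset.abs_sum_le_sum_abs _ _
    _ ≤ ∑ i ∈ Finset.range np, K := Finset.sum_le_sum fun i _ => hK _
    _ = np * K := by simp [mul_comm]
  -- orbit sums over points in orbit f p equal Sp
  have horbSp : ∀ y ∈ orbit (⇑f) p, ∑ i ∈ Finset.range np, φ ((⇑f)^[i] y) = Sp := by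
    intro y hy
    obtain ⟨k, -, hk⟩ := hy
    dsimp only at hk
    rw [← hk]
    exact sum_orbit_shift (⇑f) p hp (fun z => φ z) k
  -- inner sums
  set inner : ℕ → ℝ := fun j => ∑ i ∈ Finset.range np, φ ((⇑f)^[i] ((⇑f)^[j] q)) with hinner_def
  set Total : ℝ := ∑ j ∈ Finset.range nq, inner j with hTotal_def
  -- Total = np * ∑_j φ(f^j q)
  have hTotal : Total = np * ∑ j ∈ Finset.range nq, φ ((⇑f)^[j] q) := by
    rw [hTotal_def]
    rw [Finset.sum_comm' (s := Finset.range nq) (t := fun _ => Finset.range np)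
      (t' := Finset.range np) (s' := fun _ => Finset.range nq)
      (f := fun j i => φ ((⇑f)^[i] ((⇑f)^[j] q))) (by simp [and_comm])]
    have : ∀ i ∈ Finset.range np, ∑ j ∈ Finset.range nq, φ ((⇑f)^[i] ((⇑f)^[j] q))
        = ∑ j ∈ Finset.range nq, φ ((⇑f)^[j] q) := by
      intro i _
      have hcomm : ∀ j, (⇑f)^[i] ((⇑f)^[j] q) = (⇑f)^[j] ((⇑f)^[i] q) := fun j => by
        rw [← Function.iterate_add_apply, ← Function.iterate_add_apply, add_comm]
      simp only [hcomm]
      exact sum_orbit_shift (⇑f) q hq (fun z => φ z) i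
    rw [Finset.sum_congr rfl this, Finset.sum_const, Finset.card_range]
    simp [mul_comm]
  -- bound for j in T
  have hTbound : ∀ j ∈ T, |inner j - Sp| < np * ε := by
    intro j hj
    have hxS : (⇑f)^[j] q ∈ S := (Finset.mem_filter.mp hj).2
    have hρ : ρ ((⇑f)^[j] q) ∈ orbit (⇑f) p := hρorb _ hxS
    have hsum : ∑ i ∈ Finset.range np, φ ((⇑f)^[i] (ρ ((⇑f)^[j] q))) = Sp := horbSp _ hρ
    have : inner j - Sp
        = ∑ i ∈ Finset.range np, (φ ((⇑f)^[i] ((⇑f)^[j] q)) - φ ((⇑f)^[i] (ρ ((⇑f)^[j] q)))) := by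
      rw [Finset.sum_sub_distrib, hsum]
    rw [this]
    calc |∑ i ∈ Finset.range np, (φ ((⇑f)^[i] ((⇑f)^[j] q)) - φ ((⇑f)^[i] (ρ ((⇑f)^[j] q))))|
        ≤ ∑ i ∈ Finset.range np, |φ ((⇑f)^[i] ((⇑f)^[j] q)) - φ ((⇑f)^[i] (ρ ((⇑f)^[j] q)))| :=
          Finset.abs_sum_le_sum_abs _ _
      _ < ∑ i ∈ Finset.range np, ε := by
          apply Finset.sum_lt_sum_of_nonempty (Finset.nonempty_range_iff.mpr hnp.ne')
          intro i hi
          exact hmod _ _ (hdist _ hxS i (Finset.mem_range.mp hi))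
      _ = np * ε := by simp [mul_comm]
  -- bound for j outside T
  have hRbound : ∀ j ∈ Finset.range nq \ T, |inner j| ≤ np * K := by
    intro j _
    calc |inner j| ≤ ∑ i ∈ Finset.range np, |φ ((⇑f)^[i] ((⇑f)^[j] q))| :=
          Finset.abs_sum_le_sum_abs _ _
      _ ≤ ∑ i ∈ Finset.range np, K := Finset.sum_le_sum fun i _ => hK _
      _ = np * K := by simp [mul_comm]
  have hTpos : (0:ℝ) < T.card := by
    by_contra hc
    push_neg at hc
    have : (T.card:ℝ) / nq ≤ 0 := div_nonpos_of_nonpos_of_nonneg hc (le_of_lt hnqR)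
    linarith
  have hTne : T.Nonempty := Finset.card_pos.mp (by exact_mod_cast hTpos)
  -- main estimate on Total
  have hsplit : Total = (∑ j ∈ T, inner j) + ∑ j ∈ Finset.range nq \ T, inner j := by
    rw [hTotal_def, ← Finset.sum_sdiff hTsub]; ring
  have hmain : |Total - T.card * Sp| < T.card * np * ε + (nq - T.card) * np * K := by
    have h1 : |(∑ j ∈ T, inner j) - T.card * Sp| < T.card * (np * ε) := by
      have : (∑ j ∈ T, inner j) - T.card * Sp = ∑ j ∈ T, (inner j - Sp) := by
        rw [Finset.sum_sub_distrib, Finset.sum_const, nsmul_eq_mul]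
      rw [this]
      calc |∑ j ∈ T, (inner j - Sp)| ≤ ∑ j ∈ T, |inner j - Sp| := Finset.abs_sum_le_sum_abs _ _
        _ < ∑ j ∈ T, (np * ε) := Finset.sum_lt_sum_of_nonempty hTne hTbound
        _ = T.card * (np * ε) := by rw [Finset.sum_const, nsmul_eq_mul]
    have h2 : |∑ j ∈ Finset.range nq \ T, inner j| ≤ (nq - T.card) * (np * K) := by
      calc |∑ j ∈ Finset.range nq \ T, inner j| ≤ ∑ j ∈ Finset.range nq \ T, |inner j| :=
            Finset.abs_sum_le_sum_abs _ _
        _ ≤ ∑ j ∈ Finset.range nq \ T, (np * K) := Finset.sum_le_sum hRbound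
        _ = ((Finset.range nq \ T).card : ℝ) * (np * K) := by
            rw [Finset.sum_const, nsmul_eq_mul]
        _ = (nq - T.card) * (np * K) := by
            rw [Finset.card_sdiff_of_subset hTsub, Finset.card_range, Nat.cast_sub hTle]
    calc |Total - T.card * Sp|
        = |((∑ j ∈ T, inner j) - T.card * Sp) + ∑ j ∈ Finset.range nq \ T, inner j| := by
          rw [hsplit]; ring_nf
      _ ≤ |(∑ j ∈ T, inner j) - T.card * Sp| + |∑ j ∈ Finset.range nq \ T, inner j| :=
          abs_add_le _ _
      _ < T.card * (np * ε) + (nq - T.card) * (np * K) := by linarith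
      _ = T.card * np * ε + (nq - T.card) * np * K := by ring
  -- compute the two integrals
  have hIq : ∫ x, φ x ∂(periodicMeasure (⇑f) q) = (nq : ℝ)⁻¹ * ((np:ℝ)⁻¹ * Total) := by
    rw [integral_periodicMeasure (⇑f) q φ, hTotal]
    field_simp
    rw [← hnq_def, mul_div_cancel_right₀ _ hnqR.ne']
  have hIp : ∫ x, φ x ∂(periodicMeasure (⇑f) p) = (np : ℝ)⁻¹ * Sp :=
    integral_periodicMeasure (⇑f) p φ
  rw [hIq, hIp]
  have key : (nq : ℝ)⁻¹ * ((np:ℝ)⁻¹ * Total) - (np : ℝ)⁻¹ * Sp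
      = ((nq:ℝ) * np)⁻¹ * ((Total - T.card * Sp) + (T.card - nq) * Sp) := by
    field_simp
    ring
  rw [key]
  have hTcardR : (T.card : ℝ) ≤ nq := by exact_mod_cast hTle
  have habs : |((nq:ℝ) * np)⁻¹ * ((Total - T.card * Sp) + (T.card - nq) * Sp)|
      ≤ ((nq:ℝ) * np)⁻¹ * (|Total - T.card * Sp| + (nq - T.card) * |Sp|) := by
    rw [abs_mul, abs_of_nonneg (by positivity : (0:ℝ) ≤ ((nq:ℝ) * np)⁻¹)]
    apply mul_le_mul_of_nonneg_left _ (by positivity)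
    calc |(Total - T.card * Sp) + (T.card - nq) * Sp|
        ≤ |Total - T.card * Sp| + |(T.card - nq) * Sp| := abs_add_le _ _
      _ = |Total - T.card * Sp| + (nq - T.card) * |Sp| := by
          rw [abs_mul, abs_of_nonpos (by linarith : (T.card:ℝ) - nq ≤ 0)]
          ring_nf
  have hstep : ((nq:ℝ) * np)⁻¹ * (|Total - T.card * Sp| + (nq - T.card) * |Sp|)
      < ((nq:ℝ) * np)⁻¹ * (T.card * np * ε + (nq - T.card) * np * K + (nq - T.card) * (np * K)) := by
    apply mul_lt_mul_of_pos_left _ (by positivity)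
    have : (nq - T.card : ℝ) * |Sp| ≤ (nq - T.card) * (np * K) :=
      mul_le_mul_of_nonneg_left hSpK (by linarith)
    linarith
  have hfinal : ((nq:ℝ) * np)⁻¹ * (T.card * np * ε + (nq - T.card) * np * K + (nq - T.card) * (np * K))
      ≤ ε + 2 * K * (1 - κ) := by
    have hexp : ((nq:ℝ) * np)⁻¹ * (T.card * np * ε + (nq - T.card) * np * K + (nq - T.card) * (np * K))
        = (T.card / nq) * ε + 2 * K * (1 - T.card / nq) := by
      field_simp
      ring
    rw [hexp]
    have hs1 : (T.card : ℝ) / nq ≤ 1 := by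
      rw [div_le_one hnqR]; exact hTcardR
    have hs2 : κ < (T.card : ℝ) / nq := hκT
    nlinarith
  calc |((nq:ℝ) * np)⁻¹ * ((Total - T.card * Sp) + (T.card - nq) * Sp)|
      ≤ ((nq:ℝ) * np)⁻¹ * (|Total - T.card * Sp| + (nq - T.card) * |Sp|) := habs
    _ < ((nq:ℝ) * np)⁻¹ * (T.card * np * ε + (nq - T.card) * np * K + (nq - T.card) * (np * K)) := hstep
    _ ≤ ε + 2 * K * (1 - κ) := hfinal
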